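/- Let G, Ĝ be real p×n matrices, Σ_η a real symmetric positive definite p×p matrix, Σ_ω a real symmetric positive definite n×n matrix, α ∈ (0,1], and y ∈ ℝᵖ. Let C, Ĉ be real symmetric positive definite n×n matrices satisfying C⁻¹ = Gᵀ Σ_η⁻¹ G + (α² C + Σ_ω)⁻¹ and Ĉ⁻¹ = Ĝᵀ Σ_η⁻¹ Ĝ + (α² Ĉ + Σ_ω)⁻¹, and let r, r̂ ∈ ℝⁿ satisfy C⁻¹ r = Gᵀ Σ_η⁻¹ y + α (α² C + Σ_ω)⁻¹ r and Ĉ⁻¹ r̂ = Ĝᵀ Σ_η⁻¹ y + α (α² Ĉ + Σ_ω)⁻¹ r̂. Assume: (i) Gᵀ Σ_η⁻¹ G and Ĝᵀ Σ_η⁻¹ Ĝ are positive definite; (ii) ‖G − Ĝ‖₂ ≤ ε, ‖G‖₂ ≤ H, ‖Ĝ‖₂ ≤ H for constants ε, H > 0; (iii) ‖Gᵀ Σ_η⁻¹ G‖₂ ≥ C₁ > 0 and ‖Ĝᵀ Σ_η⁻¹ Ĝ‖₂ ≥ C₂ > 0; (iv) there exists β ∈ [0,1) with ‖(α² C + Σ_ω)⁻¹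 − (α² Ĉ + Σ_ω)⁻¹‖₂ ≤ β ‖C⁻¹ − Ĉ⁻¹‖₂; (v) the condition-number bounds ‖(Gᵀ Σ_η⁻¹ G)⁻¹‖₂ · ‖Gᵀ Σ_η⁻¹ G‖₂ ≤ K₁ and ‖(Ĝᵀ Σ_η⁻¹ Ĝ)⁻¹‖₂ · ‖Ĝᵀ Σ_η⁻¹ Ĝ‖₂ ≤ K₂ hold. Then, with H_η := ‖Σ_η⁻¹‖₂ and H_y := ‖y‖₂, it holds that ‖r − r̂‖₂ ≤ (K₁ H_η H_y / C₁) · ( 1 + 2 (1 + α β) K₂ H_η H² / ((1 − β) C₂) ) · ε. -/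

import Mathlib

open Matrix
open scoped Matrix.Norms.L2Operator

/-- The spectral norm of a real matrix: the operator norm induced by the
Euclidean norms on the domain and codomain. -/
noncomputable def specNorm {m n : ℕ} (A : Matrix (Fin m) (Fin n) ℝ) : ℝ :=
  ‖LinearMap.toContinuousLinearMap (Matrix.toEuclideanLin A)‖

/-- The Euclidean norm of a real vector. -/
noncomputable def eucNorm {n : ℕ} (v : Fin n → ℝ) : ℝ :=
  ‖(EuclideanSpace.equiv (Fin n) ℝ).symm v‖

lemma specNorm_eq_norm {m n : ℕ} (A : Matrix (Fin m) (Fin n) ℝ) : specNorm A = ‖A‖ := rfl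

lemma specNorm_nonneg {m n : ℕ} (A : Matrix (Fin m) (Fin n) ℝ) : 0 ≤ specNorm A := by
  rw [specNorm_eq_norm]; exact norm_nonneg _

lemma eucNorm_nonneg {n : ℕ} (v : Fin n → ℝ) : 0 ≤ eucNorm v := norm_nonneg _

lemma eucNorm_mulVec_le {m n : ℕ} (A : Matrix (Fin m) (Fin n) ℝ) (v : Fin n → ℝ) :
    eucNorm (A *ᵥ v) ≤ specNorm A * eucNorm v :=
  Matrix.l2_opNorm_mulVec A ((EuclideanSpace.equiv (Fin n) ℝ).symm v)

lemma eucNorm_add_le {n : ℕ} (u v : Fin n → ℝ) :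
    eucNorm (u + v) ≤ eucNorm u + eucNorm v := by
  unfold eucNorm
  rw [map_add]
  exact norm_add_le _ _

lemma specNorm_mul_le {m n l : ℕ} (A : Matrix (Fin m) (Fin n) ℝ) (B : Matrix (Fin n) (Fin l) ℝ) :
    specNorm (A * B) ≤ specNorm A * specNorm B :=
  Matrix.l2_opNorm_mul A B

lemma specNorm_add_le {m n : ℕ} (A B : Matrix (Fin m) (Fin n) ℝ) :
    specNorm (A + B) ≤ specNorm A + specNorm B := by
  simp only [specNorm_eq_norm]; exact norm_add_le _ _

lemma specNorm_sub_rev {m n : ℕ} (A B : Matrix (Fin m) (Fin n) ℝ) :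
    specNorm (A - B) = specNorm (B - A) := by
  simp only [specNorm_eq_norm]; exact norm_sub_rev _ _

lemma specNorm_smul {m n : ℕ} (c : ℝ) (A : Matrix (Fin m) (Fin n) ℝ) :
    specNorm (c • A) = |c| * specNorm A := by
  simp only [specNorm_eq_norm]
  rw [norm_smul, Real.norm_eq_abs]

lemma real_conjT {n m : ℕ} (A : Matrix (Fin m) (Fin n) ℝ) : Aᴴ = Aᵀ := by
  ext i j; simp [conjTranspose]

lemma specNorm_transpose {m n : ℕ} (A : Matrix (Fin m) (Fin n) ℝ) :
    specNorm Aᵀ = specNorm A := by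
  rw [← real_conjT, specNorm_eq_norm, specNorm_eq_norm, Matrix.l2_opNorm_conjTranspose]

lemma dotProduct_le_eucNorm {n : ℕ} (u v : Fin n → ℝ) :
    u ⬝ᵥ v ≤ eucNorm u * eucNorm v := by
  have h := real_inner_le_norm ((EuclideanSpace.equiv (Fin n) ℝ).symm u)
      ((EuclideanSpace.equiv (Fin n) ℝ).symm v)
  have he : inner ℝ ((EuclideanSpace.equiv (Fin n) ℝ).symm u)
      ((EuclideanSpace.equiv (Fin n) ℝ).symm v) = u ⬝ᵥ v := by
    simp [PiLp.inner_apply, RCLike.inner_apply, dotProduct, mul_comm]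
  rw [he] at h
  exact h

lemma eucNorm_sq {n : ℕ} (v : Fin n → ℝ) : v ⬝ᵥ v = eucNorm v ^ 2 := by
  have := real_inner_self_eq_norm_sq ((EuclideanSpace.equiv (Fin n) ℝ).symm v)
  unfold eucNorm
  rw [← this, PiLp.inner_apply]
  simp [RCLike.inner_apply, dotProduct, mul_comm, sq]

lemma specNorm_le_bound {m n : ℕ} (A : Matrix (Fin m) (Fin n) ℝ) (c : ℝ) (hc : 0 ≤ c)
    (h : ∀ v : Fin n → ℝ, eucNorm (A *ᵥ v) ≤ c * eucNorm v) : specNorm A ≤ c :=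
  ContinuousLinearMap.opNorm_le_bound _ hc fun x => h x

lemma posDef_smul_real {n : ℕ} {c : ℝ} {C : Matrix (Fin n) (Fin n) ℝ}
    (hC : C.PosDef) (hc : 0 < c) : (c • C).PosDef := by
  refine Matrix.PosDef.of_dotProduct_mulVec_pos ?_ fun x hx => ?_
  · have h := hC.1
    unfold Matrix.IsHermitian at h ⊢
    rw [conjTranspose_smul, h, star_trivial]
  · rw [smul_mulVec, dotProduct_smul, smul_eq_mul]
    exact mul_pos hc (hC.dotProduct_mulVec_pos hx)

lemma posSemidef_smul_real {n : ℕ} {c : ℝ} {S : Matrix (Fin n) (Fin n) ℝ}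
    (hS : S.PosSemidef) (hc : 0 ≤ c) : (c • S).PosSemidef := by
  refine Matrix.PosSemidef.of_dotProduct_mulVec_nonneg ?_ fun x => ?_
  · have h := hS.1
    unfold Matrix.IsHermitian at h ⊢
    rw [conjTranspose_smul, h, star_trivial]
  · rw [smul_mulVec, dotProduct_smul, smul_eq_mul]
    exact mul_nonneg hc (hS.dotProduct_mulVec_nonneg x)

open scoped MatrixOrder in
lemma inv_specNorm_le {n : ℕ} {A S : Matrix (Fin n) (Fin n) ℝ}
    (hA : A.PosDef) (hS : S.PosSemidef) :
    specNorm (A + S)⁻¹ ≤ specNorm A⁻¹ := by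
  have hM : (A + S).PosDef := hA.add_posSemidef hS
  set M := A + S with hMdef
  have hMdet : IsUnit M.det := isUnit_iff_ne_zero.mpr hM.det_pos.ne'
  have hAdet : IsUnit A.det := isUnit_iff_ne_zero.mpr hA.det_pos.ne'
  set R := CFC.sqrt A with hRdef
  have hRR : R * R = A := CFC.sqrt_mul_sqrt_self A hA.posSemidef.nonneg
  have hRherm : Rᵀ = R := by
    rw [← real_conjT]; exact (CFC.sqrt_nonneg A).posSemidef.1
  have hRdet : IsUnit R.det := by
    have h : R.det * R.det = A.det := by rw [← det_mul, hRR]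
    exact isUnit_of_mul_isUnit_left (h ▸ hAdet)
  have hRinvT : R⁻¹ᵀ = R⁻¹ := by rw [transpose_nonsing_inv, hRherm]
  have hAinv : A⁻¹ = R⁻¹ * R⁻¹ := by rw [← hRR, Matrix.mul_inv_rev]
  refine specNorm_le_bound _ _ (specNorm_nonneg A⁻¹) fun x => ?_
  set v := M⁻¹ *ᵥ x with hv
  set t := eucNorm v with ht
  have hMv : M *ᵥ v = x := by
    rw [hv, mulVec_mulVec, Matrix.mul_nonsing_inv _ hMdet, one_mulVec]
  have h1 : v ⬝ᵥ (A *ᵥ v) ≤ v ⬝ᵥ x := by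
    have hs := hS.dotProduct_mulVec_nonneg v
    rw [star_trivial] at hs
    have hx : v ⬝ᵥ x = v ⬝ᵥ (A *ᵥ v) + v ⬝ᵥ (S *ᵥ v) := by
      rw [← hMv, hMdef, add_mulVec, dotProduct_add]
    linarith
  have h2 : v ⬝ᵥ x ≤ t * eucNorm x := dotProduct_le_eucNorm v x
  have hsymm : ∀ (W : Matrix (Fin n) (Fin n) ℝ), Wᵀ = W → ∀ u : Fin n → ℝ,
      u ᵥ* W = W *ᵥ u := by
    intro W hW u
    rw [← Matrix.mulVec_transpose, hW]
  have h3 : v ⬝ᵥ (A *ᵥ v) = eucNorm (R *ᵥ v) ^ 2 := by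
    rw [← eucNorm_sq, ← hRR, ← mulVec_mulVec, dotProduct_mulVec, hsymm R hRherm]
  have h4 : v ⬝ᵥ (A⁻¹ *ᵥ v) = eucNorm (R⁻¹ *ᵥ v) ^ 2 := by
    rw [← eucNorm_sq, hAinv, ← mulVec_mulVec, dotProduct_mulVec, hsymm _ hRinvT]
  have hvv : v ⬝ᵥ v = (R⁻¹ *ᵥ v) ⬝ᵥ (R *ᵥ v) := by
    have hrr : R⁻¹ *ᵥ (R *ᵥ v) = v := by
      rw [mulVec_mulVec, Matrix.nonsing_inv_mul R hRdet, one_mulVec]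
    calc v ⬝ᵥ v = v ⬝ᵥ (R⁻¹ *ᵥ (R *ᵥ v)) := by rw [hrr]
      _ = (v ᵥ* R⁻¹) ⬝ᵥ (R *ᵥ v) := dotProduct_mulVec _ _ _
      _ = (R⁻¹ *ᵥ v) ⬝ᵥ (R *ᵥ v) := by rw [hsymm _ hRinvT]
  have h5 : t ^ 2 ≤ eucNorm (R⁻¹ *ᵥ v) * eucNorm (R *ᵥ v) := by
    rw [ht, ← eucNorm_sq, hvv]
    exact dotProduct_le_eucNorm _ _
  have h6 : eucNorm (R⁻¹ *ᵥ v) ^ 2 ≤ t * (specNorm A⁻¹ * t) := by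
    rw [← h4]
    calc v ⬝ᵥ (A⁻¹ *ᵥ v) ≤ t * eucNorm (A⁻¹ *ᵥ v) := dotProduct_le_eucNorm _ _
      _ ≤ t * (specNorm A⁻¹ * t) := by
          have := eucNorm_mulVec_le A⁻¹ v
          exact mul_le_mul_of_nonneg_left this (eucNorm_nonneg v)
  have h7 : eucNorm (R *ᵥ v) ^ 2 ≤ t * eucNorm x := by rw [← h3]; linarith
  have ht0 : 0 ≤ t := eucNorm_nonneg v
  have hx0 : 0 ≤ eucNorm x := eucNorm_nonneg x
  have hc0 : 0 ≤ specNorm A⁻¹ := specNorm_nonneg _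
  have ha0 : 0 ≤ eucNorm (R *ᵥ v) := eucNorm_nonneg _
  have hb0 : 0 ≤ eucNorm (R⁻¹ *ᵥ v) := eucNorm_nonneg _
  set a := eucNorm (R *ᵥ v) with ha
  set b := eucNorm (R⁻¹ *ᵥ v) with hb
  set c := specNorm A⁻¹ with hc
  set X := eucNorm x with hX
  have e1 : (t ^ 2) ^ 2 ≤ (b * a) ^ 2 := by
    have := pow_le_pow_left₀ (sq_nonneg t) h5 2
    simpa using this
  have e2 : (b * a) ^ 2 ≤ (t * (c * t)) * (t * X) := by
    have := mul_le_mul h6 h7 (sq_nonneg a) (by positivity)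
    calc (b * a) ^ 2 = b ^ 2 * a ^ 2 := by ring
      _ ≤ (t * (c * t)) * (t * X) := this
  have e3 : t * t ^ 3 ≤ (c * X) * t ^ 3 := by nlinarith
  rcases eq_or_lt_of_le ht0 with h | h
  · rw [← h]; positivity
  · exact le_of_mul_le_mul_right e3 (by positivity)
theorem stmt_12 {p n : ℕ} (G Ghat : Matrix (Fin p) (Fin n) ℝ)
    (Sη : Matrix (Fin p) (Fin p) ℝ) (hSη : Sη.PosDef)
    (Sω : Matrix (Fin n) (Fin n) ℝ) (hSω : Sω.PosDef)
    (α : ℝ) (hα0 : 0 < α) (hα1 : α ≤ 1) (y : Fin p → ℝ)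
    (C Chat : Matrix (Fin n) (Fin n) ℝ) (hC : C.PosDef) (hChat : Chat.PosDef)
    (hfixC : C⁻¹ = Gᵀ * Sη⁻¹ * G + (α ^ 2 • C + Sω)⁻¹)
    (hfixChat : Chat⁻¹ = Ghatᵀ * Sη⁻¹ * Ghat + (α ^ 2 • Chat + Sω)⁻¹)
    (r rhat : Fin n → ℝ)
    (hr : C⁻¹ *ᵥ r = (Gᵀ * Sη⁻¹) *ᵥ y + α • ((α ^ 2 • C + Sω)⁻¹ *ᵥ r))
    (hrhat : Chat⁻¹ *ᵥ rhat =
      (Ghatᵀ * Sη⁻¹) *ᵥ y + α • ((α ^ 2 • Chat + Sω)⁻¹ *ᵥ rhat))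
    (hGPD : (Gᵀ * Sη⁻¹ * G).PosDef) (hGhatPD : (Ghatᵀ * Sη⁻¹ * Ghat).PosDef)
    (ε H : ℝ) (hε : 0 < ε) (hH : 0 < H)
    (hGG : specNorm (G - Ghat) ≤ ε)
    (hG : specNorm G ≤ H) (hGhat : specNorm Ghat ≤ H)
    (C₁ C₂ : ℝ) (hC₁ : 0 < C₁) (hC₂ : 0 < C₂)
    (hlow : C₁ ≤ specNorm (Gᵀ * Sη⁻¹ * G))
    (hlowhat : C₂ ≤ specNorm (Ghatᵀ * Sη⁻¹ * Ghat))
    (β : ℝ) (hβ0 : 0 ≤ β) (hβ1 : β < 1)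
    (hcontr : specNorm ((α ^ 2 • C + Sω)⁻¹ - (α ^ 2 • Chat + Sω)⁻¹) ≤
      β * specNorm (C⁻¹ - Chat⁻¹))
    (K₁ K₂ : ℝ)
    (hK₁ : specNorm (Gᵀ * Sη⁻¹ * G)⁻¹ * specNorm (Gᵀ * Sη⁻¹ * G) ≤ K₁)
    (hK₂ : specNorm (Ghatᵀ * Sη⁻¹ * Ghat)⁻¹ * specNorm (Ghatᵀ * Sη⁻¹ * Ghat) ≤ K₂) :
    eucNorm (r - rhat) ≤
      K₁ * specNorm Sη⁻¹ * eucNorm y / C₁ *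
        (1 + 2 * (1 + α * β) * K₂ * specNorm Sη⁻¹ * H ^ 2 / ((1 - β) * C₂)) * ε := by
  set A := Gᵀ * Sη⁻¹ * G with hAdef
  set Ahat := Ghatᵀ * Sη⁻¹ * Ghat with hAhatdef
  set B := (α ^ 2 • C + Sω)⁻¹ with hBdef
  set Bhat := (α ^ 2 • Chat + Sω)⁻¹ with hBhatdef
  set Hη := specNorm Sη⁻¹ with hHηdef
  set Hy := eucNorm y with hHydef
  have hHη0 : 0 ≤ Hη := specNorm_nonneg _
  have hHy0 : 0 ≤ Hy := eucNorm_nonneg _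
  have h1α : 0 ≤ 1 - α := by linarith
  have h1β : 0 < 1 - β := by linarith
  -- positivity of the various matrices
  have hBpd : B.PosDef :=
    ((posDef_smul_real hC (by positivity)).add hSω).inv
  have hBhatpd : Bhat.PosDef :=
    ((posDef_smul_real hChat (by positivity)).add hSω).inv
  have hBpsd : ((1 - α) • B).PosSemidef := posSemidef_smul_real hBpd.posSemidef h1α
  have hBhatpsd : ((1 - α) • Bhat).PosSemidef :=
    posSemidef_smul_real hBhatpd.posSemidef h1α
  set M := A + (1 - α) • B with hMdef
  set Mhat := Ahat + (1 - α) • Bhat with hMhatdef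
  have hMpd : M.PosDef := hGPD.add_posSemidef hBpsd
  have hMhatpd : Mhat.PosDef := hGhatPD.add_posSemidef hBhatpsd
  have hMdet : IsUnit M.det := isUnit_iff_ne_zero.mpr hMpd.det_pos.ne'
  have hMhatdet : IsUnit Mhat.det := isUnit_iff_ne_zero.mpr hMhatpd.det_pos.ne'
  set b := (Gᵀ * Sη⁻¹) *ᵥ y with hbdef
  set bhat := (Ghatᵀ * Sη⁻¹) *ᵥ y with hbhatdef
  -- the fixed point equations in resolved form
  have hMr : M *ᵥ r = b := by
    have hAr : A *ᵥ r + B *ᵥ r = b + α • (B *ᵥ r) := by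
      rw [← add_mulVec, ← hfixC]; exact hr
    rw [hMdef, add_mulVec, smul_mulVec, sub_smul, one_smul]
    calc A *ᵥ r + (B *ᵥ r - α • (B *ᵥ r))
        = (A *ᵥ r + B *ᵥ r) - α • (B *ᵥ r) := by abel
      _ = b := by rw [hAr]; abel
  have hMrhat : Mhat *ᵥ rhat = bhat := by
    have hAr : Ahat *ᵥ rhat + Bhat *ᵥ rhat = bhat + α • (Bhat *ᵥ rhat) := by
      rw [← add_mulVec, ← hfixChat]; exact hrhat
    rw [hMhatdef, add_mulVec, smul_mulVec, sub_smul, one_smul]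
    calc Ahat *ᵥ rhat + (Bhat *ᵥ rhat - α • (Bhat *ᵥ rhat))
        = (Ahat *ᵥ rhat + Bhat *ᵥ rhat) - α • (Bhat *ᵥ rhat) := by abel
      _ = bhat := by rw [hAr]; abel
  have hrEq : r = M⁻¹ *ᵥ b := by
    rw [← hMr, mulVec_mulVec, Matrix.nonsing_inv_mul M hMdet, one_mulVec]
  have hrhatEq : rhat = Mhat⁻¹ *ᵥ bhat := by
    rw [← hMrhat, mulVec_mulVec, Matrix.nonsing_inv_mul Mhat hMhatdet, one_mulVec]
  -- decomposition of the difference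
  have hinvdiff : M⁻¹ * (Mhat - M) * Mhat⁻¹ = M⁻¹ - Mhat⁻¹ := by
    rw [Matrix.mul_sub, Matrix.sub_mul, Matrix.mul_assoc,
      Matrix.mul_nonsing_inv Mhat hMhatdet, Matrix.mul_one,
      Matrix.nonsing_inv_mul M hMdet, Matrix.one_mul]
  have hdiff : r - rhat = M⁻¹ *ᵥ (b - bhat) + (M⁻¹ * (Mhat - M) * Mhat⁻¹) *ᵥ bhat := by
    rw [hinvdiff, hrEq, hrhatEq, mulVec_sub, sub_mulVec]
    abel
  -- norm bounds on the inverses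
  have hMinv : specNorm M⁻¹ ≤ K₁ / C₁ := by
    have h1 : specNorm M⁻¹ ≤ specNorm A⁻¹ := inv_specNorm_le hGPD hBpsd
    have h2 : specNorm A⁻¹ ≤ K₁ / C₁ := by
      rw [le_div_iff₀ hC₁]
      calc specNorm A⁻¹ * C₁ ≤ specNorm A⁻¹ * specNorm A :=
            mul_le_mul_of_nonneg_left hlow (specNorm_nonneg _)
        _ ≤ K₁ := hK₁
    linarith
  have hMhatinv : specNorm Mhat⁻¹ ≤ K₂ / C₂ := by
    have h1 : specNorm Mhat⁻¹ ≤ specNorm Ahat⁻¹ := inv_specNorm_le hGhatPD hBhatpsd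
    have h2 : specNorm Ahat⁻¹ ≤ K₂ / C₂ := by
      rw [le_div_iff₀ hC₂]
      calc specNorm Ahat⁻¹ * C₂ ≤ specNorm Ahat⁻¹ * specNorm Ahat :=
            mul_le_mul_of_nonneg_left hlowhat (specNorm_nonneg _)
        _ ≤ K₂ := hK₂
    linarith
  have hK₁0 : 0 ≤ K₁ / C₁ := le_trans (specNorm_nonneg _) hMinv
  have hK₂0 : 0 ≤ K₂ / C₂ := le_trans (specNorm_nonneg _) hMhatinv
  -- bound on b - bhat
  have hbdiff : eucNorm (b - bhat) ≤ ε * (Hη * Hy) := by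
    have hid : b - bhat = ((G - Ghat)ᵀ * Sη⁻¹) *ᵥ y := by
      rw [transpose_sub, Matrix.sub_mul, sub_mulVec]
    rw [hid]
    calc eucNorm (((G - Ghat)ᵀ * Sη⁻¹) *ᵥ y)
        ≤ specNorm ((G - Ghat)ᵀ * Sη⁻¹) * Hy := eucNorm_mulVec_le _ _
      _ ≤ specNorm (G - Ghat)ᵀ * Hη * Hy :=
          mul_le_mul_of_nonneg_right (specNorm_mul_le _ _) hHy0
      _ ≤ ε * Hη * Hy := by
          rw [specNorm_transpose]
          exact mul_le_mul_of_nonneg_right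
            (mul_le_mul_of_nonneg_right hGG hHη0) hHy0
      _ = ε * (Hη * Hy) := by ring
  -- bound on bhat
  have hbhat : eucNorm bhat ≤ H * (Hη * Hy) := by
    calc eucNorm bhat ≤ specNorm (Ghatᵀ * Sη⁻¹) * Hy := eucNorm_mulVec_le _ _
      _ ≤ specNorm Ghatᵀ * Hη * Hy :=
          mul_le_mul_of_nonneg_right (specNorm_mul_le _ _) hHy0
      _ ≤ H * Hη * Hy := by
          rw [specNorm_transpose]
          exact mul_le_mul_of_nonneg_right
            (mul_le_mul_of_nonneg_right hGhat hHη0) hHy0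
      _ = H * (Hη * Hy) := by ring
  -- bound on A - Ahat
  have hAdiff : specNorm (A - Ahat) ≤ 2 * (H * Hη * ε) := by
    have hid : A - Ahat = (G - Ghat)ᵀ * Sη⁻¹ * G + Ghatᵀ * Sη⁻¹ * (G - Ghat) := by
      simp only [hAdef, hAhatdef, transpose_sub, Matrix.sub_mul, Matrix.mul_sub]
      abel
    rw [hid]
    have hb1 : specNorm ((G - Ghat)ᵀ * Sη⁻¹ * G) ≤ ε * Hη * H := by
      calc specNorm ((G - Ghat)ᵀ * Sη⁻¹ * G)
          ≤ specNorm ((G - Ghat)ᵀ * Sη⁻¹) * specNorm G := specNorm_mul_le _ _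
        _ ≤ specNorm (G - Ghat)ᵀ * Hη * specNorm G :=
            mul_le_mul_of_nonneg_right (specNorm_mul_le _ _) (specNorm_nonneg _)
        _ ≤ ε * Hη * H := by
            rw [specNorm_transpose]
            exact mul_le_mul (mul_le_mul_of_nonneg_right hGG hHη0) hG
              (specNorm_nonneg _) (by positivity)
    have hb2 : specNorm (Ghatᵀ * Sη⁻¹ * (G - Ghat)) ≤ H * Hη * ε := by
      calc specNorm (Ghatᵀ * Sη⁻¹ * (G - Ghat))
          ≤ specNorm (Ghatᵀ * Sη⁻¹) * specNorm (G - Ghat) := specNorm_mul_le _ _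
        _ ≤ specNorm Ghatᵀ * Hη * specNorm (G - Ghat) :=
            mul_le_mul_of_nonneg_right (specNorm_mul_le _ _) (specNorm_nonneg _)
        _ ≤ H * Hη * ε := by
            rw [specNorm_transpose]
            exact mul_le_mul (mul_le_mul_of_nonneg_right hGhat hHη0) hGG
              (specNorm_nonneg _) (by positivity)
    calc specNorm ((G - Ghat)ᵀ * Sη⁻¹ * G + Ghatᵀ * Sη⁻¹ * (G - Ghat))
        ≤ specNorm ((G - Ghat)ᵀ * Sη⁻¹ * G) + specNorm (Ghatᵀ * Sη⁻¹ * (G - Ghat)) :=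
          specNorm_add_le _ _
      _ ≤ ε * Hη * H + H * Hη * ε := add_le_add hb1 hb2
      _ = 2 * (H * Hη * ε) := by ring
  -- bound on C⁻¹ - Chat⁻¹
  have hCdiff : specNorm (C⁻¹ - Chat⁻¹) ≤ 2 * (H * Hη * ε) / (1 - β) := by
    have hid2 : C⁻¹ - Chat⁻¹ = (A - Ahat) + (B - Bhat) := by
      rw [hfixC, hfixChat]; abel
    have hstep : specNorm (C⁻¹ - Chat⁻¹) ≤ 2 * (H * Hη * ε) + β * specNorm (C⁻¹ - Chat⁻¹) := by
      calc specNorm (C⁻¹ - Chat⁻¹) = specNorm ((A - Ahat) + (B - Bhat)) := by rw [hid2]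
        _ ≤ specNorm (A - Ahat) + specNorm (B - Bhat) := specNorm_add_le _ _
        _ ≤ 2 * (H * Hη * ε) + β * specNorm (C⁻¹ - Chat⁻¹) := add_le_add hAdiff hcontr
    rw [le_div_iff₀ h1β]
    linarith [hstep]
  -- bound on Mhat - M
  have hMdiff : specNorm (Mhat - M) ≤ 2 * (1 + α * β) * (H * Hη * ε) / (1 - β) := by
    have hid3 : Mhat - M = (Ahat - A) + (1 - α) • (Bhat - B) := by
      rw [hMdef, hMhatdef, smul_sub]; abel
    have hstep : specNorm (Mhat - M) ≤
        2 * (H * Hη * ε) + (1 - α) * (β * specNorm (C⁻¹ - Chat⁻¹)) := by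
      calc specNorm (Mhat - M)
          = specNorm ((Ahat - A) + (1 - α) • (Bhat - B)) := by rw [hid3]
        _ ≤ specNorm (Ahat - A) + specNorm ((1 - α) • (Bhat - B)) := specNorm_add_le _ _
        _ = specNorm (A - Ahat) + (1 - α) * specNorm (B - Bhat) := by
            rw [specNorm_smul, abs_of_nonneg h1α, specNorm_sub_rev,
              specNorm_sub_rev (Bhat) B]
        _ ≤ 2 * (H * Hη * ε) + (1 - α) * (β * specNorm (C⁻¹ - Chat⁻¹)) :=
            add_le_add hAdiff (mul_le_mul_of_nonneg_left hcontr h1α)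
    have hd : specNorm (C⁻¹ - Chat⁻¹) * (1 - β) ≤ 2 * (H * Hη * ε) := by
      rw [← le_div_iff₀ h1β]; exact hCdiff
    rw [le_div_iff₀ h1β]
    have hW : 0 ≤ H * Hη * ε := by positivity
    have e1 : specNorm (Mhat - M) * (1 - β) ≤
        (2 * (H * Hη * ε) + (1 - α) * (β * specNorm (C⁻¹ - Chat⁻¹))) * (1 - β) :=
      mul_le_mul_of_nonneg_right hstep h1β.le
    have e2 : (1 - α) * β * (specNorm (C⁻¹ - Chat⁻¹) * (1 - β)) ≤
        (1 - α) * β * (2 * (H * Hη * ε)) :=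
      mul_le_mul_of_nonneg_left hd (mul_nonneg h1α hβ0)
    have e3 : 0 ≤ α * β * (H * Hη * ε) := mul_nonneg (mul_nonneg hα0.le hβ0) hW
    linarith [e1, e2, e3]
  -- assembling everything
  set D := 2 * (1 + α * β) * (H * Hη * ε) / (1 - β) with hDdef
  have hD0 : 0 ≤ D := le_trans (specNorm_nonneg _) hMdiff
  have hterm1 : eucNorm (M⁻¹ *ᵥ (b - bhat)) ≤ K₁ / C₁ * (ε * (Hη * Hy)) := by
    calc eucNorm (M⁻¹ *ᵥ (b - bhat))
        ≤ specNorm M⁻¹ * eucNorm (b - bhat) := eucNorm_mulVec_le _ _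
      _ ≤ K₁ / C₁ * (ε * (Hη * Hy)) :=
          mul_le_mul hMinv hbdiff (eucNorm_nonneg _) hK₁0
  have hterm2 : eucNorm ((M⁻¹ * (Mhat - M) * Mhat⁻¹) *ᵥ bhat) ≤
      K₁ / C₁ * D * (K₂ / C₂) * (H * (Hη * Hy)) := by
    have hs1 : specNorm (M⁻¹ * (Mhat - M) * Mhat⁻¹) ≤ K₁ / C₁ * D * (K₂ / C₂) := by
      calc specNorm (M⁻¹ * (Mhat - M) * Mhat⁻¹)
          ≤ specNorm (M⁻¹ * (Mhat - M)) * specNorm Mhat⁻¹ := specNorm_mul_le _ _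
        _ ≤ specNorm M⁻¹ * specNorm (Mhat - M) * specNorm Mhat⁻¹ :=
            mul_le_mul_of_nonneg_right (specNorm_mul_le _ _) (specNorm_nonneg _)
        _ ≤ K₁ / C₁ * D * (K₂ / C₂) :=
            mul_le_mul (mul_le_mul hMinv hMdiff (specNorm_nonneg _) hK₁0)
              hMhatinv (specNorm_nonneg _) (mul_nonneg hK₁0 hD0)
    calc eucNorm ((M⁻¹ * (Mhat - M) * Mhat⁻¹) *ᵥ bhat)
        ≤ specNorm (M⁻¹ * (Mhat - M) * Mhat⁻¹) * eucNorm bhat := eucNorm_mulVec_le _ _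
      _ ≤ K₁ / C₁ * D * (K₂ / C₂) * (H * (Hη * Hy)) :=
          mul_le_mul hs1 hbhat (eucNorm_nonneg _)
            (mul_nonneg (mul_nonneg hK₁0 hD0) hK₂0)
  have hsum : eucNorm (r - rhat) ≤
      K₁ / C₁ * (ε * (Hη * Hy)) + K₁ / C₁ * D * (K₂ / C₂) * (H * (Hη * Hy)) := by
    rw [hdiff]
    exact le_trans (eucNorm_add_le _ _) (add_le_add hterm1 hterm2)
  have heq : K₁ / C₁ * (ε * (Hη * Hy)) + K₁ / C₁ * D * (K₂ / C₂) * (H * (Hη * Hy)) =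
      K₁ * Hη * Hy / C₁ *
        (1 + 2 * (1 + α * β) * K₂ * Hη * H ^ 2 / ((1 - β) * C₂)) * ε := by
    rw [hDdef]
    field_simp
  rw [← heq]
  exact hsum
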